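/- Every derivation of R_{𝐧₁}(0) maps the ideal 𝐧₁ into itself. -/

import Mathlib

/-- Structure constants of `𝐧₁`. -/
def cc (i j : ℕ) : ℤ :=
  if ((i : ℤ) - j) % 3 = 1 then 1 else if ((i : ℤ) - j) % 3 = 2 then -1 else 0

/- `R_{𝐧₁}(0)` is modelled as a Lie algebra `L` with basis `b : ℕ → L`, where
`x = b 0`, `y = b 1`, and `e_n = b (n+1)` for `n ≥ 1`; thus the paper's
`e_{3i-2}, e_{3i-1}, e_{3i}` (for `i ≥ 1`) are `b (3i'+2), b (3i'+3), b (3i'+4)`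
with `i = i'+1`. The bracket rules are:
`[e_i,e_j] = c_{i,j} e_{i+j}`; `[e_{3i-2},x] = i e_{3i-2}`, `[e_{3i-1},x] = (i-1)e_{3i-1}`,
`[e_{3i},x] = i e_{3i}`; `[e_{3i-2},y] = -e_{3i-2}`, `[e_{3i-1},y] = e_{3i-1}`,
`[e_{3i},y] = 0`; `[x,y] = 0`. -/

/-- every derivation of `R_{𝐧₁}(0)` maps the ideal `𝐧₁` into itself. -/
theorem statement14 (L : Type*) [LieRing L] [LieAlgebra ℂ L] (b : Module.Basis ℕ ℂ L)
    (h1 : ∀ i j : ℕ, ⁅b (i + 2), b (j + 2)⁆ = (cc (i + 1) (j + 1) : ℂ) • b (i + j + 3))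
    (h2 : ∀ i : ℕ, ⁅b (3 * i + 2), b 0⁆ = ((i : ℂ) + 1) • b (3 * i + 2))
    (h3 : ∀ i : ℕ, ⁅b (3 * i + 3), b 0⁆ = (i : ℂ) • b (3 * i + 3))
    (h4 : ∀ i : ℕ, ⁅b (3 * i + 4), b 0⁆ = ((i : ℂ) + 1) • b (3 * i + 4))
    (h5 : ∀ i : ℕ, ⁅b (3 * i + 2), b 1⁆ = -b (3 * i + 2))
    (h6 : ∀ i : ℕ, ⁅b (3 * i + 3), b 1⁆ = b (3 * i + 3))
    (h7 : ∀ i : ℕ, ⁅b (3 * i + 4), b 1⁆ = 0)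
    (h8 : ⁅b 0, b 1⁆ = 0)
    (d : LieDerivation ℂ L L) :
    ∀ n : ℕ, d (b (n + 2)) ∈ Submodule.span ℂ (Set.range fun m : ℕ => b (m + 2)) := by
  set N := Submodule.span ℂ (Set.range fun m : ℕ => b (m + 2)) with hNdef
  have hmem : ∀ m : ℕ, b (m + 2) ∈ N := fun m => Submodule.subset_span ⟨m, rfl⟩
  -- bracket of any basis vector with b 0 lies in N
  have hb0 : ∀ k : ℕ, ⁅b k, b 0⁆ ∈ N := by
    intro k
    match k with
    | 0 => simp
    | 1 => rw [← lie_skew, h8]; simp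
    | (k+2) =>
      rcases (by omega : k % 3 = 0 ∨ k % 3 = 1 ∨ k % 3 = 2) with h | h | h
      · rw [(by omega : k + 2 = 3 * (k / 3) + 2), h2]
        exact N.smul_mem _ (hmem (3 * (k / 3)))
      · rw [(by omega : k + 2 = 3 * (k / 3) + 3), h3]
        exact N.smul_mem _ (hmem (3 * (k / 3) + 1))
      · rw [(by omega : k + 2 = 3 * (k / 3) + 4), h4]
        exact N.smul_mem _ (hmem (3 * (k / 3) + 2))
  have hb1 : ∀ k : ℕ, ⁅b k, b 1⁆ ∈ N := by
    intro k
    match k with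
    | 0 => rw [h8]; exact N.zero_mem
    | 1 => simp
    | (k+2) =>
      rcases (by omega : k % 3 = 0 ∨ k % 3 = 1 ∨ k % 3 = 2) with h | h | h
      · rw [(by omega : k + 2 = 3 * (k / 3) + 2), h5]
        exact N.neg_mem (hmem (3 * (k / 3)))
      · rw [(by omega : k + 2 = 3 * (k / 3) + 3), h6]
        exact hmem (3 * (k / 3) + 1)
      · rw [(by omega : k + 2 = 3 * (k / 3) + 4), h7]
        exact N.zero_mem
  -- bracket of b (k+2) with any basis vector lies in N
  have hbj : ∀ k j : ℕ, ⁅b (k + 2), b j⁆ ∈ N := by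
    intro k j
    match j with
    | 0 => exact hb0 (k + 2)
    | 1 => exact hb1 (k + 2)
    | (j+2) => rw [h1]; exact N.smul_mem _ (hmem (k + j + 1))
  -- extend to arbitrary second arguments via the basis
  have hspan : ∀ w : L, w ∈ Submodule.span ℂ (Set.range b) := by
    intro w; rw [b.span_eq]; trivial
  have hlie0 : ∀ w : L, ⁅w, b 0⁆ ∈ N := by
    intro w
    refine Submodule.span_induction (p := fun w _ => ⁅w, b 0⁆ ∈ N) ?_ ?_ ?_ ?_ (hspan w)
    · rintro x ⟨k, rfl⟩; exact hb0 k
    · simp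
    · intro x y _ _ hx hy; rw [add_lie]; exact N.add_mem hx hy
    · intro c x _ hx; rw [smul_lie]; exact N.smul_mem _ hx
  have hlie1 : ∀ w : L, ⁅w, b 1⁆ ∈ N := by
    intro w
    refine Submodule.span_induction (p := fun w _ => ⁅w, b 1⁆ ∈ N) ?_ ?_ ?_ ?_ (hspan w)
    · rintro x ⟨k, rfl⟩; exact hb1 k
    · simp
    · intro x y _ _ hx hy; rw [add_lie]; exact N.add_mem hx hy
    · intro c x _ hx; rw [smul_lie]; exact N.smul_mem _ hx
  have hlieR : ∀ (k : ℕ) (w : L), ⁅b (k + 2), w⁆ ∈ N := by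
    intro k w
    refine Submodule.span_induction (p := fun w _ => ⁅b (k + 2), w⁆ ∈ N) ?_ ?_ ?_ ?_ (hspan w)
    · rintro x ⟨j, rfl⟩; exact hbj k j
    · simp
    · intro x y _ _ hx hy; rw [lie_add]; exact N.add_mem hx hy
    · intro c x _ hx; rw [lie_smul]; exact N.smul_mem _ hx
  intro n
  rcases (by omega : n % 3 = 0 ∨ n % 3 = 1 ∨ n % 3 = 2) with h | h | h
  · set i := n / 3 with hi
    rw [(by omega : n + 2 = 3 * i + 2)]
    have hne : ((i : ℂ) + 1) ≠ 0 := Nat.cast_add_one_ne_zero i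
    have e1 : ((i : ℂ) + 1) • d (b (3 * i + 2))
        = ⁅d (b (3 * i + 2)), b 0⁆ + ⁅b (3 * i + 2), d (b 0)⁆ := by
      rw [← map_smul, ← h2, d.apply_lie_eq_add]
      abel
    have e2 : d (b (3 * i + 2)) = ((i : ℂ) + 1)⁻¹ •
        (⁅d (b (3 * i + 2)), b 0⁆ + ⁅b (3 * i + 2), d (b 0)⁆) := by
      rw [← e1, smul_smul, inv_mul_cancel₀ hne, one_smul]
    rw [e2]
    exact N.smul_mem _ (N.add_mem (hlie0 _) (hlieR _ _))
  · set i := n / 3 with hi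
    rw [(by omega : n + 2 = 3 * i + 3)]
    have e1 : d (b (3 * i + 3))
        = ⁅d (b (3 * i + 3)), b 1⁆ + ⁅b (3 * i + 3), d (b 1)⁆ := by
      conv_lhs => rw [← h6 i]
      rw [d.apply_lie_eq_add]
      abel
    rw [e1]
    exact N.add_mem (hlie1 _) (hlieR _ _)
  · set i := n / 3 with hi
    rw [(by omega : n + 2 = 3 * i + 4)]
    have hne : ((i : ℂ) + 1) ≠ 0 := Nat.cast_add_one_ne_zero i
    have e1 : ((i : ℂ) + 1) • d (b (3 * i + 4))
        = ⁅d (b (3 * i + 4)), b 0⁆ + ⁅b (3 * i + 4), d (b 0)⁆ := by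
      rw [← map_smul, ← h4, d.apply_lie_eq_add]
      abel
    have e2 : d (b (3 * i + 4)) = ((i : ℂ) + 1)⁻¹ •
        (⁅d (b (3 * i + 4)), b 0⁆ + ⁅b (3 * i + 4), d (b 0)⁆) := by
      rw [← e1, smul_smul, inv_mul_cancel₀ hne, one_smul]
    rw [e2]
    exact N.smul_mem _ (N.add_mem (hlie0 _) (hlieR _ _))
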